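/- Let C(z) be an n×n matrix with polynomial entries in z such that m = max_i ( j − i + n·deg C_{ij}(z) ) for every column j = 1,…,n, where m and n are coprime and deg denotes polynomial degree (with the convention that only finite entries achieve the max). Then the coefficients of the characteristic polynomial p_{C(z)}(λ) = λⁿ + c₁(z)λ^{n−1} + … + cₙ(z) satisfy n·deg c_s < ms for all s = 1,…,n−1, and deg cₙ = m, provided additionally that in every row there is a unique entry C_{ij} with m = j − i + n·deg C_{ij}. -/
import Mathlib


open Polynomial

private lemma gap_lemma {m n s d : ℕ} (hcop : Nat.Coprime m n) (hs : 1 ≤ s) (hsn : s < n)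
    (h : n * d ≤ m * s) : n * d < m * s := by
  rcases lt_or_eq_of_le h with h | h
  · exact h
  · exfalso
    have hdvd : n ∣ m * s := Dvd.intro d h
    have hns : n ∣ s := (Nat.Coprime.symm hcop).dvd_of_dvd_mul_left hdvd
    have := Nat.le_of_dvd (by omega) hns
    omega

noncomputable def phiz (n : ℕ) : Polynomial ℂ →+* Polynomial (Polynomial ℂ) :=
  ((Polynomial.expand (Polynomial ℂ) n).toRingHom).comp (Polynomial.mapRingHom Polynomial.C)

lemma natDegree_phiz (n : ℕ) (a : Polynomial ℂ) :
    (phiz n a).natDegree = a.natDegree * n := by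
  simp only [phiz, RingHom.comp_apply, AlgHom.toRingHom_eq_coe, AlgHom.coe_toRingHom,
    coe_mapRingHom, natDegree_expand]
  rw [natDegree_map_eq_of_injective Polynomial.C_injective]

lemma coeff_phiz {n : ℕ} (hn : 0 < n) (a : Polynomial ℂ) (r : ℕ) :
    (phiz n a).coeff r = if n ∣ r then Polynomial.C (a.coeff (r / n)) else 0 := by
  simp only [phiz, RingHom.comp_apply, AlgHom.toRingHom_eq_coe, AlgHom.coe_toRingHom,
    coe_mapRingHom, coeff_expand hn, coeff_map]

noncomputable def Phiw (n m : ℕ) : Polynomial (Polynomial ℂ) →+* Polynomial (Polynomial ℂ) :=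
  Polynomial.eval₂RingHom (phiz n) (Polynomial.C Polynomial.X * Polynomial.X ^ m)

lemma Phiw_X (n m : ℕ) : Phiw n m X = Polynomial.C Polynomial.X * Polynomial.X ^ m :=
  eval₂_X _ _

lemma Phiw_C (n m : ℕ) (a : Polynomial ℂ) : Phiw n m (Polynomial.C a) = phiz n a :=
  eval₂_C _ _

lemma le_natDegree_Phiw {n m : ℕ} (hn : 0 < n) (P : Polynomial (Polynomial ℂ)) (k : ℕ)
    (hc : P.coeff k ≠ 0) :
    n * (P.coeff k).natDegree + m * k ≤ (Phiw n m P).natDegree := by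
  set d := (P.coeff k).natDegree with hd
  set N := n * d + m * k with hN
  apply le_natDegree_of_ne_zero
  intro h0
  have e1 : (Phiw n m P) = ∑ e ∈ P.support,
      phiz n (P.coeff e) * (Polynomial.C Polynomial.X * Polynomial.X ^ m) ^ e := by
    rw [Phiw, coe_eval₂RingHom, eval₂_eq_sum, Polynomial.sum]
  have key : ((Phiw n m P).coeff N).coeff k = (P.coeff k).coeff d := by
    rw [e1, finset_sum_coeff, finset_sum_coeff]
    rw [Finset.sum_eq_single k]
    · rw [mul_pow, ← Polynomial.C_pow, ← pow_mul, ← mul_assoc, coeff_mul_X_pow',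
        if_pos (by omega : m * k ≤ N), coeff_mul_C, coeff_phiz hn,
        (by omega : N - m * k = n * d), if_pos (dvd_mul_right n d),
        Nat.mul_div_cancel_left d hn, coeff_C_mul, coeff_X_pow, if_pos rfl, mul_one]
    · intro e he hek
      rw [mul_pow, ← Polynomial.C_pow, ← pow_mul, ← mul_assoc, coeff_mul_X_pow']
      split_ifs with h1
      · rw [coeff_mul_C, coeff_phiz hn]
        split_ifs with h2
        · rw [coeff_C_mul, coeff_X_pow, if_neg (fun h => hek h.symm), mul_zero]
        · simp
      · simp
    · intro hk
      exact absurd (Polynomial.mem_support_iff.mpr hc) hk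
  rw [h0] at key
  simp only [coeff_zero] at key
  exact (Polynomial.leadingCoeff_ne_zero.mpr hc) key.symm


/-- let `C(z)` be an `n×n` matrix of polynomials, with `m, n`
coprime, `0 < n < m`, satisfying the degree condition
`m = max_i (j − i + n·deg C_{ij})` in every column `j` (i.e. every entry obeys
`n·deg C_{ij} ≤ m + i − j` and every column attains the value `m`), and
suppose that in every row there is a unique entry attaining
`m = j − i + n·deg C_{ij}`.  Then, writing the characteristic polynomial as
`p_{C(z)}(λ) = λⁿ + c₁(z)λ^{n−1} + … + cₙ(z)` (so `c_s = charpoly.coeff (n−s)`),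
one has `n·deg c_s < m·s` for `s = 1,…,n−1` and `deg cₙ = m`. -/
theorem charpoly_coeff_degrees (n m : ℕ) (hn : 0 < n) (hnm : n < m)
    (hcop : Nat.Coprime m n)
    (C : Matrix (Fin n) (Fin n) (Polynomial ℂ))
    (hdeg : ∀ i j, C i j ≠ 0 →
      (n : ℤ) * (C i j).natDegree ≤ (m : ℤ) + (i : ℕ) - (j : ℕ))
    (hcolmax : ∀ j, ∃ i, C i j ≠ 0 ∧
      (n : ℤ) * (C i j).natDegree = (m : ℤ) + (i : ℕ) - (j : ℕ))
    (hrowuniq : ∀ i, ∃! j, C i j ≠ 0 ∧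
      (n : ℤ) * (C i j).natDegree = (m : ℤ) + (i : ℕ) - (j : ℕ)) :
    (∀ s : ℕ, 1 ≤ s → s < n →
        (C.charpoly.coeff (n - s) = 0 ∨
          n * (C.charpoly.coeff (n - s)).natDegree < m * s)) ∧
    (C.charpoly.coeff 0 ≠ 0 ∧ (C.charpoly.coeff 0).natDegree = m) := by
  have hnz : (n : ℤ) ≠ 0 := by exact_mod_cast hn.ne'
  -- the common sum identity
  have hsum2 : ∀ σ : Equiv.Perm (Fin n),
      ∑ i : Fin n, ((m : ℤ) + ((σ i : ℕ) : ℤ) - ((i : ℕ) : ℤ)) = n * m := by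
    intro σ
    have hc := Equiv.sum_comp σ (fun j : Fin n => ((j : ℕ) : ℤ))
    rw [Finset.sum_sub_distrib, Finset.sum_add_distrib, hc]
    simp [Finset.sum_const, mul_comm]
  ---------------------------------------------------------------------------
  -- PART 1 : bound on natDegree (Phiw n m charpoly)
  ---------------------------------------------------------------------------
  have hPhiP : Phiw n m C.charpoly = ((Matrix.charmatrix C).map (Phiw n m)).det := by
    rw [Matrix.charpoly, RingHom.map_det, RingHom.mapMatrix_apply]
  have hentry : ∀ (σ : Equiv.Perm (Fin n)) (i : Fin n),
      ((((Matrix.charmatrix C).map (Phiw n m)) (σ i) i).natDegree : ℤ) ≤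
        (m : ℤ) + ((σ i : ℕ) : ℤ) - ((i : ℕ) : ℤ) := by
    intro σ i
    have hi : ((i : ℕ) : ℤ) < n := by exact_mod_cast i.isLt
    have hm : (n : ℤ) < m := by exact_mod_cast hnm
    rw [Matrix.map_apply]
    by_cases h : σ i = i
    · rw [h, Matrix.charmatrix_apply_eq, map_sub, Phiw_X, Phiw_C]
      have h1 : (Polynomial.C (Polynomial.X : Polynomial ℂ) *
          (Polynomial.X : Polynomial (Polynomial ℂ)) ^ m).natDegree = m :=
        natDegree_C_mul_X_pow m _ Polynomial.X_ne_zero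
      by_cases ha : C i i = 0
      · rw [ha, map_zero, sub_zero, h1]
        omega
      · have h2 : ((phiz n (C i i)).natDegree : ℤ) ≤ m := by
          rw [natDegree_phiz]
          have h9 := hdeg i i ha
          have h8 : (m:ℤ) + ((i:ℕ):ℤ) - ((i:ℕ):ℤ) = m := by ring
          rw [h8] at h9
          push_cast
          linarith
        have h3 := natDegree_sub_le (Polynomial.C (Polynomial.X : Polynomial ℂ) *
          (Polynomial.X : Polynomial (Polynomial ℂ)) ^ m) (phiz n (C i i))
        rw [h1] at h3
        have hd : (phiz n (C i i)).natDegree ≤ m := by exact_mod_cast h2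
        have h5 := h3.trans (max_le le_rfl hd)
        have h6 : (((Polynomial.C (Polynomial.X : Polynomial ℂ) *
            (Polynomial.X : Polynomial (Polynomial ℂ)) ^ m - phiz n (C i i)).natDegree) : ℤ) ≤ m :=
          by exact_mod_cast h5
        omega
    · rw [Matrix.charmatrix_apply_ne _ _ _ h, map_neg, Phiw_C, natDegree_neg]
      by_cases ha : C (σ i) i = 0
      · rw [ha, map_zero, natDegree_zero]
        push_cast
        omega
      · have h9 := hdeg (σ i) i ha
        rw [natDegree_phiz]
        push_cast
        linarith
  
  have hn0 : (0:ℤ) < n := by exact_mod_cast hn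
  have hPhidegle : (Phiw n m C.charpoly).natDegree ≤ m * n := by
    rw [hPhiP, Matrix.det_apply']
    apply natDegree_sum_le_of_forall_le
    intro σ _
    have h2 := Polynomial.natDegree_prod_le Finset.univ
      (fun i => ((Matrix.charmatrix C).map (Phiw n m)) (σ i) i)
    have h3 : ((∏ i, ((Matrix.charmatrix C).map (Phiw n m)) (σ i) i).natDegree : ℤ) ≤
        ∑ i, ((((Matrix.charmatrix C).map (Phiw n m)) (σ i) i).natDegree : ℤ) := by
      exact_mod_cast h2
    have h1 : ((∏ i, ((Matrix.charmatrix C).map (Phiw n m)) (σ i) i).natDegree : ℤ) ≤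
        (n : ℤ) * m := by
      refine h3.trans ?_
      rw [← hsum2 σ]
      exact Finset.sum_le_sum (fun i _ => hentry σ i)
    have h4 : (∏ i, ((Matrix.charmatrix C).map (Phiw n m)) (σ i) i).natDegree ≤ m * n := by
      have : ((∏ i, ((Matrix.charmatrix C).map (Phiw n m)) (σ i) i).natDegree : ℤ) ≤
          ((m * n : ℕ) : ℤ) := h1.trans_eq (by push_cast; ring)
      exact_mod_cast this
    refine (natDegree_mul_le).trans ?_
    rw [natDegree_intCast]
    omega
  have part1 : ∀ s : ℕ, 1 ≤ s → s < n →
      (C.charpoly.coeff (n - s) = 0 ∨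
        n * (C.charpoly.coeff (n - s)).natDegree < m * s) := by
    intro s hs1 hsn
    by_cases hc : C.charpoly.coeff (n - s) = 0
    · exact Or.inl hc
    · right
      have h1 := le_natDegree_Phiw (m := m) hn C.charpoly (n - s) hc
      have h3 : m * (n - s) + m * s = m * n := by
        rw [← Nat.mul_add]
        congr 1
        omega
      have h4 : n * (C.charpoly.coeff (n - s)).natDegree ≤ m * s := by
        have := h1.trans hPhidegle
        linarith
      exact gap_lemma hcop hs1 hsn h4
  ---------------------------------------------------------------------------
  -- PART 2 : determinant degree
  ---------------------------------------------------------------------------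
  choose f hf1 hf2 using hrowuniq
  have hfsurj : Function.Surjective f := by
    intro j
    obtain ⟨i, hi⟩ := hcolmax j
    exact ⟨i, (hf2 i j hi).symm⟩
  have hfbij : Function.Bijective f := Finite.surjective_iff_bijective.mp hfsurj
  let e : Fin n ≃ Fin n := Equiv.ofBijective f hfbij
  have he : ∀ x, e x = f x := fun x => rfl
  have hσ0 : ∀ i, f (e.symm i) = i := by
    intro i
    rw [← he]
    exact e.apply_symm_apply i
  have hA : ∀ i : Fin n, C (e.symm i) i ≠ 0 ∧
      (n : ℤ) * (C (e.symm i) i).natDegree =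
        (m : ℤ) + ((e.symm i : ℕ) : ℤ) - ((i : ℕ) : ℤ) := by
    intro i
    have h := hf1 (e.symm i)
    rw [hσ0 i] at h
    exact h
  have hP0ne : (∏ i : Fin n, C (e.symm i) i) ≠ 0 :=
    Finset.prod_ne_zero_iff.mpr fun i _ => (hA i).1
  have hP0deg : (∏ i : Fin n, C (e.symm i) i).natDegree = m := by
    have h1 : (∏ i : Fin n, C (e.symm i) i).natDegree
        = ∑ i, (C (e.symm i) i).natDegree :=
      natDegree_prod _ _ (fun i _ => (hA i).1)
    have h2 : (n : ℤ) * (∑ i, ((C (e.symm i) i).natDegree : ℤ)) = (n : ℤ) * m := by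
      rw [Finset.mul_sum, Finset.sum_congr rfl (fun i _ => (hA i).2), hsum2 e.symm]
    have h3 : (∑ i, ((C (e.symm i) i).natDegree : ℤ)) = m := mul_left_cancel₀ hnz h2
    rw [h1]
    exact_mod_cast h3
  have hupper : ∀ σ : Equiv.Perm (Fin n), (∏ i, C (σ i) i).natDegree ≤ m := by
    intro σ
    by_cases hz : ∀ i, C (σ i) i ≠ 0
    · have h2 : ((∏ i, C (σ i) i).natDegree : ℤ) ≤ ∑ i, ((C (σ i) i).natDegree : ℤ) := by
        exact_mod_cast Polynomial.natDegree_prod_le Finset.univ (fun i => C (σ i) i)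
      have h3 : (n : ℤ) * ∑ i, ((C (σ i) i).natDegree : ℤ) ≤ (n : ℤ) * m := by
        rw [Finset.mul_sum, ← hsum2 σ]
        exact Finset.sum_le_sum fun i _ => hdeg (σ i) i (hz i)
      have h4 : (∑ i, ((C (σ i) i).natDegree : ℤ)) ≤ m := le_of_mul_le_mul_left h3 hn0
      exact_mod_cast h2.trans h4
    · push_neg at hz
      obtain ⟨i, hi⟩ := hz
      rw [Finset.prod_eq_zero (f := fun j => C (σ j) j) (Finset.mem_univ i) hi, natDegree_zero]
      exact Nat.zero_le m
  have hother : ∀ σ : Equiv.Perm (Fin n), σ ≠ (e.symm : Equiv.Perm (Fin n)) →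
      (∏ i, C (σ i) i).coeff m = 0 := by
    intro σ hne
    by_cases hz : ∀ i, C (σ i) i ≠ 0
    · have hex : ∃ k, (n : ℤ) * ((C (σ k) k).natDegree : ℤ) ≠
          (m : ℤ) + ((σ k : ℕ) : ℤ) - ((k : ℕ) : ℤ) := by
        by_contra hall
        push_neg at hall
        apply hne
        apply Equiv.ext
        intro i
        have h5 : i = f (σ i) := hf2 (σ i) i ⟨hz i, hall i⟩
        have h6 : e (σ i) = i := by rw [he (σ i), ← h5]
        calc σ i = e.symm (e (σ i)) := (e.symm_apply_apply _).symm
        _ = e.symm i := by rw [h6]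
      obtain ⟨k, hk⟩ := hex
      apply coeff_eq_zero_of_natDegree_lt
      have h2 : ((∏ i, C (σ i) i).natDegree : ℤ) ≤ ∑ i, ((C (σ i) i).natDegree : ℤ) := by
        exact_mod_cast Polynomial.natDegree_prod_le Finset.univ (fun i => C (σ i) i)
      have h3 : (n : ℤ) * (∑ i, ((C (σ i) i).natDegree : ℤ)) < (n : ℤ) * m := by
        rw [Finset.mul_sum]
        calc ∑ i, (n : ℤ) * ((C (σ i) i).natDegree : ℤ)
            < ∑ i, ((m : ℤ) + ((σ i : ℕ) : ℤ) - ((i : ℕ) : ℤ)) :=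
              Finset.sum_lt_sum (fun i _ => hdeg (σ i) i (hz i))
                ⟨k, Finset.mem_univ k, lt_of_le_of_ne (hdeg (σ k) k (hz k)) hk⟩
          _ = (n : ℤ) * m := hsum2 σ
      have h4 : (∑ i, ((C (σ i) i).natDegree : ℤ)) < m := lt_of_mul_lt_mul_left h3 hn0.le
      exact_mod_cast h2.trans_lt h4
    · push_neg at hz
      obtain ⟨i, hi⟩ := hz
      rw [Finset.prod_eq_zero (f := fun j => C (σ j) j) (Finset.mem_univ i) hi, coeff_zero]
  have hdetc : C.det.coeff m ≠ 0 := by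
    rw [Matrix.det_apply', finset_sum_coeff]
    rw [Finset.sum_eq_single (e.symm : Equiv.Perm (Fin n))]
    · rw [← zsmul_eq_mul, coeff_smul]
      have hl : (∏ i : Fin n, C (e.symm i) i).coeff m ≠ 0 := by
        rw [← hP0deg]
        exact Polynomial.leadingCoeff_ne_zero.mpr hP0ne
      rcases Int.units_eq_one_or (Equiv.Perm.sign (e.symm : Equiv.Perm (Fin n))) with hs | hs <;>
        rw [hs] <;> simp [hl]
    · intro σ _ hσ
      rw [← zsmul_eq_mul, coeff_smul, hother σ hσ, smul_zero]
    · intro h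
      exact absurd (Finset.mem_univ _) h
  have hdetdeg : C.det.natDegree = m := by
    apply le_antisymm
    · rw [Matrix.det_apply']
      apply natDegree_sum_le_of_forall_le
      intro σ _
      refine (natDegree_mul_le).trans ?_
      rw [natDegree_intCast]
      have := hupper σ
      omega
    · exact le_natDegree_of_ne_zero hdetc
  have hdet0 : C.det ≠ 0 := fun h => hdetc (by rw [h, coeff_zero])
  have hfin : C.charpoly.coeff 0 ≠ 0 ∧ (C.charpoly.coeff 0).natDegree = m := by
    have h0 := Matrix.det_eq_sign_charpoly_coeff C
    rw [Fintype.card_fin] at h0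
    rcases Nat.even_or_odd n with he2 | ho
    · rw [Even.neg_one_pow he2, one_mul] at h0
      rw [← h0]
      exact ⟨hdet0, hdetdeg⟩
    · rw [Odd.neg_one_pow ho, neg_one_mul] at h0
      have h1 : C.charpoly.coeff 0 = -C.det := by rw [h0, neg_neg]
      rw [h1]
      exact ⟨neg_ne_zero.mpr hdet0, by rw [natDegree_neg]; exact hdetdeg⟩
  exact ⟨part1, hfin⟩
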